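/- arXiv:1902.05282 — 3 statements merged into one kernel-verified Lean document; each statement's English description precedes it below -/
import Mathlib

section
/- Let λ : [0, ∞) → (0, ∞) be continuously differentiable, σ : [0, ∞) → (0, ∞) be twice continuously differentiable, and μ : [0, ∞) → ℝ be continuous, and fix α₀ > 0 and β₀ ∈ ℝ. Then there exist ε > 0 and continuously differentiable functions α, β, γ on [0, ε) with α(t) > 0, γ′(t) > 0, α(0) = α₀, β(0) = β₀, γ(0) = 0, satisfying for all t ∈ [0, ε): (i) σ(γ(t)) · α(t) · √(γ′(t)) = 1; (ii) λ(γ(t)) · γ′(t) − α′(t)/α(t) = 1; (iii) β′(t) + β(t) − α(t) · μ(γ(t)) · γ′(t) = 0. Moreover, this solution is unique: any two triples of continuously differentiable functions satisfying (i)–(iii) with these initial conditions agree on the intersection of their domains. -/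
open Set
open scoped NNReal


lemma exists_c1_extension {f : ℝ → ℝ} (hf : ContDiffOn ℝ 1 f (Ici 0)) :
    ∃ F : ℝ → ℝ, ContDiff ℝ 1 F ∧ EqOn F f (Ici 0) := by
  set d : ℝ → ℝ := derivWithin f (Ici 0) with hd_def
  set F : ℝ → ℝ := fun x => if 0 ≤ x then f x else f 0 + d 0 * x with hF_def
  set D : ℝ → ℝ := fun x => if 0 ≤ x then d x else d 0 with hD_def
  have hEq : EqOn F f (Ici 0) := fun x hx => if_pos hx
  have hd : ∀ x ∈ Ici (0:ℝ), HasDerivWithinAt f (d x) (Ici 0) x := fun x hx =>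
    (hf.differentiableOn one_ne_zero x hx).hasDerivWithinAt
  have hdc : ContinuousOn d (Ici 0) :=
    hf.continuousOn_derivWithin (uniqueDiffOn_Ici 0) le_rfl
  have hFD : ∀ x, HasDerivAt F (D x) x := by
    intro x
    rcases lt_trichotomy x 0 with hx | hx | hx
    · have hlin : HasDerivAt (fun y => f 0 + d 0 * y) (d 0) x := by
        simpa using ((hasDerivAt_id x).const_mul (d 0)).const_add (f 0)
      have : F =ᶠ[nhds x] fun y => f 0 + d 0 * y := by
        filter_upwards [Iio_mem_nhds hx] with y hy
        simp [hF_def, not_le.mpr (mem_Iio.mp hy)]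
      have h2 : HasDerivAt F (d 0) x := hlin.congr_of_eventuallyEq this
      simpa [hD_def, not_le.mpr hx] using h2
    · subst hx
      have h1 : HasDerivWithinAt F (d 0) (Ici 0) 0 :=
        (hd 0 (mem_Ici.mpr le_rfl)).congr (fun y hy => hEq hy) (hEq (mem_Ici.mpr le_rfl))
      have hlin : HasDerivAt (fun y => f 0 + d 0 * y) (d 0) 0 := by
        simpa using ((hasDerivAt_id (0:ℝ)).const_mul (d 0)).const_add (f 0)
      have h2 : HasDerivWithinAt F (d 0) (Iic 0) 0 := by
        refine hlin.hasDerivWithinAt.congr (fun y hy => ?_) ?_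
        · rcases eq_or_lt_of_le (mem_Iic.mp hy) with h | h
          · simp [hF_def, h]
          · simp [hF_def, not_le.mpr h]
        · simp [hF_def]
      have := h1.union h2
      rw [union_comm, Iic_union_Ici] at this
      simpa [hD_def] using this.hasDerivAt (by simp)
    · have hder : HasDerivAt f (d x) x := (hd x hx.le).hasDerivAt (Ici_mem_nhds hx)
      have : F =ᶠ[nhds x] f := by
        filter_upwards [Ioi_mem_nhds hx] with y hy
        exact hEq (mem_Ici.mpr (le_of_lt (mem_Ioi.mp hy)))
      have h2 : HasDerivAt F (d x) x := hder.congr_of_eventuallyEq this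
      simpa [hD_def, hx.le] using h2
  have hDc : Continuous D := by
    rw [continuous_iff_continuousAt]
    intro x
    rcases lt_trichotomy x 0 with hx | hx | hx
    · have : D =ᶠ[nhds x] fun _ => d 0 := by
        filter_upwards [Iio_mem_nhds hx] with y hy
        simp [hD_def, not_le.mpr (mem_Iio.mp hy)]
      exact continuousAt_const.congr this.symm
    · subst hx
      have h1 : ContinuousWithinAt D (Ici 0) 0 := by
        refine ((hdc 0 (mem_Ici.mpr le_rfl)).congr (fun y hy => ?_) (by simp [hD_def]))
        simp [hD_def, mem_Ici.mp hy]
      have h2 : ContinuousWithinAt D (Iic 0) 0 := by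
        refine (continuousWithinAt_const (b := d 0)).congr (fun y hy => ?_) (by simp [hD_def])
        rcases eq_or_lt_of_le (mem_Iic.mp hy) with h | h
        · simp [hD_def, h]
        · simp [hD_def, not_le.mpr h]
      have := h1.union h2
      rw [union_comm, Iic_union_Ici] at this
      simpa [continuousWithinAt_univ] using this
    · have hc : ContinuousAt d x := (hdc.continuousAt (Ici_mem_nhds hx))
      have : D =ᶠ[nhds x] d := by
        filter_upwards [Ioi_mem_nhds hx] with y hy
        simp [hD_def, le_of_lt (mem_Ioi.mp hy)]
      exact hc.congr this.symm
  refine ⟨F, ?_, hEq⟩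
  rw [contDiff_one_iff_deriv]
  constructor
  · exact fun x => (hFD x).differentiableAt
  · have : deriv F = D := funext fun x => (hFD x).deriv
    rw [this]; exact hDc

lemma aux_lipschitz {E₁ E₂ : Type*} [NormedAddCommGroup E₁] [NormedSpace ℝ E₁]
    [NormedAddCommGroup E₂] [NormedSpace ℝ E₂]
    {F : E₁ → E₂} {U s : Set E₁} (hU : IsOpen U) (hF : ContDiffOn ℝ 1 F U)
    (hs : s ⊆ U) (hconv : Convex ℝ s) (hcomp : IsCompact s) :
    ∃ K : ℝ≥0, LipschitzOnWith K F s := by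
  have hfc : ContinuousOn (fderiv ℝ F) s :=
    (hF.continuousOn_fderiv_of_isOpen hU le_rfl).mono hs
  obtain ⟨C, hC⟩ := hcomp.exists_bound_of_continuousOn hfc
  refine ⟨C.toNNReal, Convex.lipschitzOnWith_of_nnnorm_fderiv_le
    (fun x hx => (hF.differentiableOn one_ne_zero).differentiableAt (hU.mem_nhds (hs hx)))
    (fun x hx => ?_) hconv⟩
  rw [← NNReal.coe_le_coe, coe_nnnorm, Real.coe_toNNReal']
  exact (hC x hx).trans (le_max_left _ _)

lemma aux_nonneg {γ c : ℝ → ℝ} {ε : ℝ}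
    (hd : ∀ t ∈ Ico (0:ℝ) ε, HasDerivWithinAt γ (c t) (Ico (0:ℝ) ε) t)
    (hpos : ∀ t ∈ Ico (0:ℝ) ε, 0 < c t) (h0 : γ 0 = 0) :
    ∀ t ∈ Ico (0:ℝ) ε, 0 ≤ γ t := by
  have hmono : StrictMonoOn γ (Ico (0:ℝ) ε) := by
    refine strictMonoOn_of_deriv_pos (convex_Ico 0 ε)
      (fun t ht => (hd t ht).continuousWithinAt) (fun x hx => ?_)
    rw [interior_Ico] at hx
    have hx' : x ∈ Ico (0:ℝ) ε := Ioo_subset_Ico_self hx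
    have := (hd x hx').hasDerivAt (Ico_mem_nhds hx.1 hx.2)
    rw [this.deriv]
    exact hpos x hx'
  intro t ht
  rcases eq_or_lt_of_le ht.1 with h | h
  · rw [← h, h0]
  · have h0m : (0:ℝ) ∈ Ico (0:ℝ) ε := ⟨le_rfl, lt_trans h ht.2⟩
    have := hmono h0m ht h
    rw [h0] at this
    exact this.le


/-- The transformation functions `α, β, γ` (with derivative functions `α', β', γ'`)
solve the ODE system of Definition 3.3 of the paper on `[0, ε)` with initial data
`α(0) = α₀, β(0) = β₀, γ(0) = 0`, in the continuously differentiable sense. -/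
def SolvesOUSystem (lam sig mu : ℝ → ℝ) (α₀ β₀ ε : ℝ)
    (α β γ α' β' γ' : ℝ → ℝ) : Prop :=
  (∀ t ∈ Set.Ico (0 : ℝ) ε, HasDerivWithinAt α (α' t) (Set.Ico (0 : ℝ) ε) t) ∧
  (∀ t ∈ Set.Ico (0 : ℝ) ε, HasDerivWithinAt β (β' t) (Set.Ico (0 : ℝ) ε) t) ∧
  (∀ t ∈ Set.Ico (0 : ℝ) ε, HasDerivWithinAt γ (γ' t) (Set.Ico (0 : ℝ) ε) t) ∧
  ContinuousOn α' (Set.Ico (0 : ℝ) ε) ∧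
  ContinuousOn β' (Set.Ico (0 : ℝ) ε) ∧
  ContinuousOn γ' (Set.Ico (0 : ℝ) ε) ∧
  (∀ t ∈ Set.Ico (0 : ℝ) ε, 0 < α t) ∧
  (∀ t ∈ Set.Ico (0 : ℝ) ε, 0 < γ' t) ∧
  α 0 = α₀ ∧ β 0 = β₀ ∧ γ 0 = 0 ∧
  (∀ t ∈ Set.Ico (0 : ℝ) ε, sig (γ t) * α t * Real.sqrt (γ' t) = 1) ∧
  (∀ t ∈ Set.Ico (0 : ℝ) ε, lam (γ t) * γ' t - α' t / α t = 1) ∧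
  (∀ t ∈ Set.Ico (0 : ℝ) ε, β' t + β t - α t * mu (γ t) * γ' t = 0)



lemma lip_const_sub (w : ℝ) : LipschitzWith 1 (fun x : ℝ => w - x) :=
  LipschitzWith.of_dist_le_mul fun x y => by
    simp only [Real.dist_eq]
    rw [sub_sub_sub_cancel_left, abs_sub_comm]
    simp

lemma sol_formulas {lam sig mu : ℝ → ℝ}
    (hsigpos : ∀ t ∈ Set.Ici (0:ℝ), 0 < sig t)
    {α₀ β₀ ε : ℝ} {α β γ a b c : ℝ → ℝ}
    (h : SolvesOUSystem lam sig mu α₀ β₀ ε α β γ a b c) :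
    ∀ t ∈ Set.Ico (0:ℝ) ε, 0 ≤ γ t ∧
      c t = 1/(sig (γ t)^2 * (α t)^2) ∧ a t = α t * (lam (γ t) * c t - 1) := by
  obtain ⟨hα, hβ, hγ, hca, hcb, hcc, hαpos, hcpos, hα0, hβ0, hγ0, heq1, heq2, heq3⟩ := h
  have hγnn := aux_nonneg hγ hcpos hγ0
  intro t ht
  have h1 : 0 ≤ γ t := hγnn t ht
  have hs : 0 < sig (γ t) := hsigpos _ h1
  have hA : 0 < α t := hαpos t ht
  have hc : 0 < c t := hcpos t ht
  have hsqrt : Real.sqrt (c t) = 1/(sig (γ t) * α t) := by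
    rw [eq_div_iff (by positivity)]
    linear_combination heq1 t ht
  have hcf : c t = 1/(sig (γ t)^2 * (α t)^2) := by
    have h2 : c t = Real.sqrt (c t)^2 := (Real.sq_sqrt hc.le).symm
    rw [h2, hsqrt, div_pow, one_pow, mul_pow]
  refine ⟨h1, hcf, ?_⟩
  have h2 := heq2 t ht
  have hane : α t ≠ 0 := ne_of_gt hA
  have h3 : a t / α t = lam (γ t) * c t - 1 := by linarith
  calc a t = (a t / α t) * α t := by field_simp
    _ = α t * (lam (γ t) * c t - 1) := by rw [h3]; ring

lemma unique_part {lam sig mu : ℝ → ℝ}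
    (hlam : ContDiffOn ℝ 1 lam (Set.Ici 0))
    (hsig : ContDiffOn ℝ 2 sig (Set.Ici 0))
    (hsigpos : ∀ t ∈ Set.Ici (0:ℝ), 0 < sig t)
    {α₀ β₀ : ℝ}
    {ε₁ ε₂ : ℝ} {α₁ β₁ γ₁ a₁ b₁ c₁ α₂ β₂ γ₂ a₂ b₂ c₂ : ℝ → ℝ}
    (h₁ : SolvesOUSystem lam sig mu α₀ β₀ ε₁ α₁ β₁ γ₁ a₁ b₁ c₁)
    (h₂ : SolvesOUSystem lam sig mu α₀ β₀ ε₂ α₂ β₂ γ₂ a₂ b₂ c₂) :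
    ∀ t ∈ Set.Ico (0:ℝ) (min ε₁ ε₂), α₁ t = α₂ t ∧ β₁ t = β₂ t ∧ γ₁ t = γ₂ t := by
  have F₁ := sol_formulas hsigpos h₁
  have F₂ := sol_formulas hsigpos h₂
  set m := min ε₁ ε₂ with hm
  have hmε₁ : m ≤ ε₁ := min_le_left _ _
  have hmε₂ : m ≤ ε₂ := min_le_right _ _
  obtain ⟨hα₁d, hβ₁d, hγ₁d, _, _, _, hα₁pos, hc₁pos, hα₁0, hβ₁0, hγ₁0, _, _, heq3₁⟩ := h₁
  obtain ⟨hα₂d, hβ₂d, hγ₂d, _, _, _, hα₂pos, hc₂pos, hα₂0, hβ₂0, hγ₂0, _, _, heq3₂⟩ := h₂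
  obtain ⟨S, hS, hSeq⟩ := exists_c1_extension (hsig.of_le one_le_two)
  obtain ⟨L, hL, hLeq⟩ := exists_c1_extension hlam
  set Fv : ℝ × ℝ → ℝ × ℝ :=
    fun p => (1/(S p.1^2 * p.2^2), L p.1/(S p.1^2 * p.2) - p.2) with hFv
  set U : Set (ℝ × ℝ) := {p | S p.1 ≠ 0 ∧ p.2 ≠ 0} with hUdef
  have hUopen : IsOpen U := by
    have h1 : IsOpen ((fun p : ℝ × ℝ => S p.1) ⁻¹' {(0:ℝ)}ᶜ) :=
      isOpen_compl_singleton.preimage (hS.continuous.comp continuous_fst)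
    have h2 : IsOpen ((fun p : ℝ × ℝ => p.2) ⁻¹' {(0:ℝ)}ᶜ) :=
      isOpen_compl_singleton.preimage continuous_snd
    exact h1.inter h2
  have hFC : ContDiffOn ℝ 1 Fv U := by
    have hden1 : ContDiff ℝ 1 (fun p : ℝ × ℝ => S p.1^2 * p.2^2) :=
      ((hS.comp contDiff_fst).pow 2).mul (contDiff_snd.pow 2)
    have hden2 : ContDiff ℝ 1 (fun p : ℝ × ℝ => S p.1^2 * p.2) :=
      ((hS.comp contDiff_fst).pow 2).mul contDiff_snd
    have hnum2 : ContDiff ℝ 1 (fun p : ℝ × ℝ => L p.1) := hL.comp contDiff_fst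
    refine ContDiffOn.prodMk ?_ ?_
    · exact ContDiffOn.div contDiffOn_const hden1.contDiffOn
        (fun p hp => mul_ne_zero (pow_ne_zero _ hp.1) (pow_ne_zero _ hp.2))
    · exact (ContDiffOn.div hnum2.contDiffOn hden2.contDiffOn
        (fun p hp => mul_ne_zero (pow_ne_zero _ hp.1) hp.2)).sub contDiff_snd.contDiffOn
  have hpair : ∀ T ∈ Set.Ico (0:ℝ) m, γ₁ T = γ₂ T ∧ α₁ T = α₂ T := by
    intro T hT
    have hTm : T < m := hT.2
    have hsub₁ : Icc (0:ℝ) T ⊆ Ico (0:ℝ) ε₁ :=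
      fun u hu => ⟨hu.1, lt_of_le_of_lt hu.2 (lt_of_lt_of_le hTm hmε₁)⟩
    have hsub₂ : Icc (0:ℝ) T ⊆ Ico (0:ℝ) ε₂ :=
      fun u hu => ⟨hu.1, lt_of_le_of_lt hu.2 (lt_of_lt_of_le hTm hmε₂)⟩
    have hγ₁c : ContinuousOn γ₁ (Icc 0 T) :=
      fun u hu => ((hγ₁d u (hsub₁ hu)).continuousWithinAt.mono hsub₁)
    have hα₁c : ContinuousOn α₁ (Icc 0 T) :=
      fun u hu => ((hα₁d u (hsub₁ hu)).continuousWithinAt.mono hsub₁)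
    have hγ₂c : ContinuousOn γ₂ (Icc 0 T) :=
      fun u hu => ((hγ₂d u (hsub₂ hu)).continuousWithinAt.mono hsub₂)
    have hα₂c : ContinuousOn α₂ (Icc 0 T) :=
      fun u hu => ((hα₂d u (hsub₂ hu)).continuousWithinAt.mono hsub₂)
    obtain ⟨M₁, hM₁⟩ := isCompact_Icc.exists_bound_of_continuousOn hγ₁c
    obtain ⟨M₂, hM₂⟩ := isCompact_Icc.exists_bound_of_continuousOn hγ₂c
    obtain ⟨B₁, hB₁⟩ := isCompact_Icc.exists_bound_of_continuousOn hα₁c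
    obtain ⟨B₂, hB₂⟩ := isCompact_Icc.exists_bound_of_continuousOn hα₂c
    have hne : (Icc (0:ℝ) T).Nonempty := ⟨0, le_rfl, hT.1⟩
    obtain ⟨x₁, hx₁m, hx₁⟩ := isCompact_Icc.exists_isMinOn hne hα₁c
    obtain ⟨x₂, hx₂m, hx₂⟩ := isCompact_Icc.exists_isMinOn hne hα₂c
    set cm := min (α₁ x₁) (α₂ x₂) with hcmdef
    have hcm : 0 < cm := lt_min (hα₁pos x₁ (hsub₁ hx₁m)) (hα₂pos x₂ (hsub₂ hx₂m))
    set M := max M₁ M₂ with hMdef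
    set B := max B₁ B₂ with hBdef
    set sset : Set (ℝ × ℝ) := Icc (0:ℝ) M ×ˢ Icc cm B with hssetdef
    have hmem₁ : ∀ u ∈ Icc (0:ℝ) T, (γ₁ u, α₁ u) ∈ sset := by
      intro u hu
      refine ⟨⟨(F₁ u (hsub₁ hu)).1, ?_⟩, ⟨le_trans (min_le_left _ _) ((isMinOn_iff.mp hx₁) u hu), ?_⟩⟩
      · exact le_trans (le_abs_self _) (le_trans (hM₁ u hu) (le_max_left _ _))
      · exact le_trans (le_abs_self _) (le_trans (hB₁ u hu) (le_max_left _ _))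
    have hmem₂ : ∀ u ∈ Icc (0:ℝ) T, (γ₂ u, α₂ u) ∈ sset := by
      intro u hu
      refine ⟨⟨(F₂ u (hsub₂ hu)).1, ?_⟩, ⟨le_trans (min_le_right _ _) ((isMinOn_iff.mp hx₂) u hu), ?_⟩⟩
      · exact le_trans (le_abs_self _) (le_trans (hM₂ u hu) (le_max_right _ _))
      · exact le_trans (le_abs_self _) (le_trans (hB₂ u hu) (le_max_right _ _))
    have hssU : sset ⊆ U := by
      rintro ⟨g, a⟩ ⟨hg, ha⟩
      refine ⟨?_, ne_of_gt (lt_of_lt_of_le hcm ha.1)⟩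
      rw [hSeq (mem_Ici.mpr hg.1)]
      exact ne_of_gt (hsigpos g (mem_Ici.mpr hg.1))
    obtain ⟨K, hK⟩ := aux_lipschitz hUopen hFC hssU
      ((convex_Icc _ _).prod (convex_Icc _ _)) (isCompact_Icc.prod isCompact_Icc)
    have hnhds : ∀ t ∈ Ico (0:ℝ) T, ∀ {ε : ℝ}, T < ε → Ico (0:ℝ) ε ∈ nhdsWithin t (Ici t) := by
      intro t ht ε hε
      rw [mem_nhdsWithin]
      exact ⟨Iio ε, isOpen_Iio, lt_trans ht.2 hε, fun y hy => ⟨le_trans ht.1 hy.2, hy.1⟩⟩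
    have hTε₁ : T < ε₁ := lt_of_lt_of_le hTm hmε₁
    have hTε₂ : T < ε₂ := lt_of_lt_of_le hTm hmε₂
    have hd₁ : ∀ t ∈ Ico (0:ℝ) T,
        HasDerivWithinAt (fun u => (γ₁ u, α₁ u)) (Fv (γ₁ t, α₁ t)) (Ici t) t := by
      intro t ht
      have htm : t ∈ Ico (0:ℝ) ε₁ := ⟨ht.1, lt_trans ht.2 hTε₁⟩
      have hp := HasDerivWithinAt.prodMk ((hγ₁d t htm).mono_of_mem_nhdsWithin (hnhds t ht hTε₁))
        ((hα₁d t htm).mono_of_mem_nhdsWithin (hnhds t ht hTε₁))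
      obtain ⟨hγnn, hcf, haf⟩ := F₁ t htm
      have hs0 : sig (γ₁ t) ≠ 0 := ne_of_gt (hsigpos _ (mem_Ici.mpr hγnn))
      have ha0 : α₁ t ≠ 0 := ne_of_gt (hα₁pos t htm)
      have hFeq : Fv (γ₁ t, α₁ t) = (c₁ t, a₁ t) := by
        refine Prod.ext ?_ ?_
        · show 1/(S (γ₁ t)^2 * (α₁ t)^2) = c₁ t
          rw [hSeq (mem_Ici.mpr hγnn), hcf]
        · show L (γ₁ t)/(S (γ₁ t)^2 * α₁ t) - α₁ t = a₁ t
          rw [hSeq (mem_Ici.mpr hγnn), hLeq (mem_Ici.mpr hγnn), haf, hcf]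
          field_simp
      rw [hFeq]
      exact hp
    have hd₂ : ∀ t ∈ Ico (0:ℝ) T,
        HasDerivWithinAt (fun u => (γ₂ u, α₂ u)) (Fv (γ₂ t, α₂ t)) (Ici t) t := by
      intro t ht
      have htm : t ∈ Ico (0:ℝ) ε₂ := ⟨ht.1, lt_trans ht.2 hTε₂⟩
      have hp := HasDerivWithinAt.prodMk ((hγ₂d t htm).mono_of_mem_nhdsWithin (hnhds t ht hTε₂))
        ((hα₂d t htm).mono_of_mem_nhdsWithin (hnhds t ht hTε₂))
      obtain ⟨hγnn, hcf, haf⟩ := F₂ t htm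
      have hs0 : sig (γ₂ t) ≠ 0 := ne_of_gt (hsigpos _ (mem_Ici.mpr hγnn))
      have ha0 : α₂ t ≠ 0 := ne_of_gt (hα₂pos t htm)
      have hFeq : Fv (γ₂ t, α₂ t) = (c₂ t, a₂ t) := by
        refine Prod.ext ?_ ?_
        · show 1/(S (γ₂ t)^2 * (α₂ t)^2) = c₂ t
          rw [hSeq (mem_Ici.mpr hγnn), hcf]
        · show L (γ₂ t)/(S (γ₂ t)^2 * α₂ t) - α₂ t = a₂ t
          rw [hSeq (mem_Ici.mpr hγnn), hLeq (mem_Ici.mpr hγnn), haf, hcf]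
          field_simp
      rw [hFeq]
      exact hp
    have ha0 : (fun u => (γ₁ u, α₁ u)) 0 = (fun u => (γ₂ u, α₂ u)) 0 := by
      simp only [hγ₁0, hα₁0, hγ₂0, hα₂0]
    have key := ODE_solution_unique_of_mem_Icc_right
      (v := fun _ : ℝ => Fv) (s := fun _ : ℝ => sset) (fun _ _ => hK)
      (hγ₁c.prodMk hα₁c) hd₁ (fun t ht => hmem₁ t (Ico_subset_Icc_self ht))
      (hγ₂c.prodMk hα₂c) hd₂ (fun t ht => hmem₂ t (Ico_subset_Icc_self ht)) ha0
    have := key (right_mem_Icc.mpr hT.1)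
    exact ⟨congrArg Prod.fst this, congrArg Prod.snd this⟩
  have hceq : ∀ t ∈ Set.Ico (0:ℝ) m, c₁ t = c₂ t := by
    intro t ht
    rw [(F₁ t ⟨ht.1, lt_of_lt_of_le ht.2 hmε₁⟩).2.1, (F₂ t ⟨ht.1, lt_of_lt_of_le ht.2 hmε₂⟩).2.1,
      (hpair t ht).1, (hpair t ht).2]
  have hbeta : ∀ T ∈ Set.Ico (0:ℝ) m, β₁ T = β₂ T := by
    intro T hT
    have hTε₁ : T < ε₁ := lt_of_lt_of_le hT.2 hmε₁
    have hTε₂ : T < ε₂ := lt_of_lt_of_le hT.2 hmε₂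
    have hsub₁ : Icc (0:ℝ) T ⊆ Ico (0:ℝ) ε₁ := fun u hu => ⟨hu.1, lt_of_le_of_lt hu.2 hTε₁⟩
    have hsub₂ : Icc (0:ℝ) T ⊆ Ico (0:ℝ) ε₂ := fun u hu => ⟨hu.1, lt_of_le_of_lt hu.2 hTε₂⟩
    set w : ℝ → ℝ := fun t => α₁ t * mu (γ₁ t) * c₁ t with hwdef
    have hv : ∀ t : ℝ, LipschitzOnWith 1 (fun x : ℝ => w t - x) univ :=
      fun t => (lip_const_sub (w t)).lipschitzOnWith
    have hnhds : ∀ t ∈ Ico (0:ℝ) T, ∀ {ε : ℝ}, T < ε → Ico (0:ℝ) ε ∈ nhdsWithin t (Ici t) := by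
      intro t ht ε hε
      rw [mem_nhdsWithin]
      exact ⟨Iio ε, isOpen_Iio, lt_trans ht.2 hε, fun y hy => ⟨le_trans ht.1 hy.2, hy.1⟩⟩
    have hdb₁ : ∀ t ∈ Ico (0:ℝ) T, HasDerivWithinAt β₁ (w t - β₁ t) (Ici t) t := by
      intro t ht
      have htm : t ∈ Ico (0:ℝ) ε₁ := ⟨ht.1, lt_trans ht.2 hTε₁⟩
      have hb := (hβ₁d t htm).mono_of_mem_nhdsWithin (hnhds t ht hTε₁)
      have hval : b₁ t = w t - β₁ t := by
        have := heq3₁ t htm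
        simp only [hwdef]
        linarith
      rwa [hval] at hb
    have hdb₂ : ∀ t ∈ Ico (0:ℝ) T, HasDerivWithinAt β₂ (w t - β₂ t) (Ici t) t := by
      intro t ht
      have htm : t ∈ Ico (0:ℝ) ε₂ := ⟨ht.1, lt_trans ht.2 hTε₂⟩
      have htmm : t ∈ Ico (0:ℝ) m := ⟨ht.1, lt_trans ht.2 hT.2⟩
      have hb := (hβ₂d t htm).mono_of_mem_nhdsWithin (hnhds t ht hTε₂)
      have hval : b₂ t = w t - β₂ t := by
        have h3 := heq3₂ t htm
        have hw : w t = α₂ t * mu (γ₂ t) * c₂ t := by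
          simp only [hwdef]
          rw [(hpair t htmm).1, (hpair t htmm).2, hceq t htmm]
        rw [hw]
        linarith
      rwa [hval] at hb
    have hβ₁c : ContinuousOn β₁ (Icc 0 T) :=
      fun u hu => ((hβ₁d u (hsub₁ hu)).continuousWithinAt.mono hsub₁)
    have hβ₂c : ContinuousOn β₂ (Icc 0 T) :=
      fun u hu => ((hβ₂d u (hsub₂ hu)).continuousWithinAt.mono hsub₂)
    have hinit : β₁ 0 = β₂ 0 := by rw [hβ₁0, hβ₂0]
    have key := ODE_solution_unique_of_mem_Icc_right
      (v := fun t x => w t - x) (s := fun _ : ℝ => univ) (fun t _ => hv t)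
      hβ₁c hdb₁ (fun t _ => mem_univ _) hβ₂c hdb₂ (fun t _ => mem_univ _) hinit
    exact key (right_mem_Icc.mpr hT.1)
  intro t ht
  exact ⟨(hpair t ht).2, hbeta t ht, (hpair t ht).1⟩

lemma exists_part {lam sig mu : ℝ → ℝ}
    (hlam : ContDiffOn ℝ 1 lam (Set.Ici 0))
    (hsig : ContDiffOn ℝ 2 sig (Set.Ici 0))
    (hsigpos : ∀ t ∈ Set.Ici (0:ℝ), 0 < sig t)
    (hmu : ContinuousOn mu (Set.Ici 0))
    (α₀ β₀ : ℝ) (hα₀ : 0 < α₀) :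
    ∃ ε > 0, ∃ α β γ α' β' γ' : ℝ → ℝ,
      SolvesOUSystem lam sig mu α₀ β₀ ε α β γ α' β' γ' := by
  obtain ⟨S, hS, hSeq⟩ := exists_c1_extension (hsig.of_le one_le_two)
  obtain ⟨L, hL, hLeq⟩ := exists_c1_extension hlam
  set Fv : ℝ × ℝ → ℝ × ℝ :=
    fun p => (1/(S p.1^2 * p.2^2), L p.1/(S p.1^2 * p.2) - p.2) with hFv
  set U : Set (ℝ × ℝ) := {p | S p.1 ≠ 0 ∧ p.2 ≠ 0} with hUdef
  have hUopen : IsOpen U := by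
    have h1 : IsOpen ((fun p : ℝ × ℝ => S p.1) ⁻¹' {(0:ℝ)}ᶜ) :=
      isOpen_compl_singleton.preimage (hS.continuous.comp continuous_fst)
    have h2 : IsOpen ((fun p : ℝ × ℝ => p.2) ⁻¹' {(0:ℝ)}ᶜ) :=
      isOpen_compl_singleton.preimage continuous_snd
    exact h1.inter h2
  have hFC : ContDiffOn ℝ 1 Fv U := by
    have hden1 : ContDiff ℝ 1 (fun p : ℝ × ℝ => S p.1^2 * p.2^2) :=
      ((hS.comp contDiff_fst).pow 2).mul (contDiff_snd.pow 2)
    have hden2 : ContDiff ℝ 1 (fun p : ℝ × ℝ => S p.1^2 * p.2) :=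
      ((hS.comp contDiff_fst).pow 2).mul contDiff_snd
    have hnum2 : ContDiff ℝ 1 (fun p : ℝ × ℝ => L p.1) := hL.comp contDiff_fst
    refine ContDiffOn.prodMk ?_ ?_
    · exact ContDiffOn.div contDiffOn_const hden1.contDiffOn
        (fun p hp => mul_ne_zero (pow_ne_zero _ hp.1) (pow_ne_zero _ hp.2))
    · exact (ContDiffOn.div hnum2.contDiffOn hden2.contDiffOn
        (fun p hp => mul_ne_zero (pow_ne_zero _ hp.1) hp.2)).sub contDiff_snd.contDiffOn
  have hsig0 : 0 < sig 0 := hsigpos 0 (mem_Ici.mpr le_rfl)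
  have hS0 : S 0 = sig 0 := hSeq (mem_Ici.mpr le_rfl)
  have hmem0 : ((0:ℝ), α₀) ∈ U := by
    refine ⟨?_, ne_of_gt hα₀⟩
    show S 0 ≠ 0
    rw [hS0]; exact ne_of_gt hsig0
  have hCA : ContDiffAt ℝ 1 Fv (0, α₀) := hFC.contDiffAt (hUopen.mem_nhds hmem0)
  obtain ⟨f, hf0, ε₀, hε₀, hf⟩ := ContDiffAt.exists_forall_mem_closedBall_exists_eq_forall_mem_Ioo_hasDerivAt₀ hCA 0
  rw [zero_sub, zero_add] at hf
  have h0Ioo : (0:ℝ) ∈ Ioo (-ε₀) ε₀ := ⟨neg_lt_zero.mpr hε₀, hε₀⟩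
  have hfc0 : ContinuousAt f 0 := (hf 0 h0Ioo).continuousAt
  have hval1 : (f 0).1 = 0 := by rw [hf0]
  have hval2 : (f 0).2 = α₀ := by rw [hf0]
  -- find a neighborhood where positivity holds
  have h1 : {t : ℝ | 0 < (f t).2} ∈ nhds (0:ℝ) := by
    have hc : ContinuousAt (fun t => (f t).2) 0 := continuous_snd.continuousAt.comp hfc0
    have : (0:ℝ) < (f 0).2 := by rw [hval2]; exact hα₀
    exact hc (Ioi_mem_nhds this)
  have h2 : {t : ℝ | 0 < S ((f t).1)} ∈ nhds (0:ℝ) := by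
    have hc : ContinuousAt (fun t => S ((f t).1)) 0 :=
      hS.continuous.continuousAt.comp (continuous_fst.continuousAt.comp hfc0)
    have : (0:ℝ) < S ((f 0).1) := by rw [hval1, hS0]; exact hsig0
    exact hc (Ioi_mem_nhds this)
  obtain ⟨δ, hδpos, hδ⟩ := Metric.mem_nhds_iff.mp (Filter.inter_mem h1 h2)
  set ε := min δ ε₀ with hεdef
  have hεpos : 0 < ε := lt_min hδpos hε₀
  have hεε₀ : ε ≤ ε₀ := min_le_right _ _
  have hkey : ∀ t ∈ Ioo (-ε) ε, t ∈ Ioo (-ε₀) ε₀ ∧ 0 < (f t).2 ∧ 0 < S ((f t).1) := by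
    intro t ht
    have htIoo : t ∈ Ioo (-ε₀) ε₀ :=
      ⟨lt_of_le_of_lt (neg_le_neg hεε₀) ht.1, lt_of_lt_of_le ht.2 hεε₀⟩
    have htball : t ∈ Metric.ball (0:ℝ) δ := by
      rw [Metric.mem_ball, Real.dist_eq, sub_zero, abs_lt]
      exact ⟨lt_of_le_of_lt (neg_le_neg (min_le_left δ ε₀)) ht.1,
        lt_of_lt_of_le ht.2 (min_le_left _ _)⟩
    have := hδ htball
    exact ⟨htIoo, this.1, this.2⟩
  have hIcosub : Ico (0:ℝ) ε ⊆ Ioo (-ε) ε :=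
    fun t ht => ⟨lt_of_lt_of_le (neg_lt_zero.mpr hεpos) ht.1, ht.2⟩
  -- the candidate functions
  set γ : ℝ → ℝ := fun t => (f t).1 with hγdef
  set A : ℝ → ℝ := fun t => (f t).2 with hAdef
  set γ' : ℝ → ℝ := fun t => 1/(S ((f t).1)^2 * ((f t).2)^2) with hγ'def
  set a' : ℝ → ℝ := fun t => L ((f t).1)/(S ((f t).1)^2 * (f t).2) - (f t).2 with ha'def
  have hFveq : ∀ t, Fv (f t) = (γ' t, a' t) := fun t => rfl
  have hγd : ∀ t ∈ Ioo (-ε) ε, HasDerivAt γ (γ' t) t := by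
    intro t ht
    have h := hasFDerivAt_fst.comp_hasDerivAt t (hf t (hkey t ht).1)
    rw [hFveq t] at h
    simpa [Function.comp_def] using h
  have hAd : ∀ t ∈ Ioo (-ε) ε, HasDerivAt A (a' t) t := by
    intro t ht
    have h := hasFDerivAt_snd.comp_hasDerivAt t (hf t (hkey t ht).1)
    rw [hFveq t] at h
    simpa [Function.comp_def] using h
  have hApos : ∀ t ∈ Ico (0:ℝ) ε, 0 < A t := fun t ht => (hkey t (hIcosub ht)).2.1
  have hSpos : ∀ t ∈ Ioo (-ε) ε, 0 < S ((f t).1) := fun t ht => (hkey t ht).2.2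
  have hγ'pos : ∀ t ∈ Ioo (-ε) ε, 0 < γ' t := by
    intro t ht
    have h1 := (hkey t ht).2.1
    have h2 := (hkey t ht).2.2
    exact one_div_pos.mpr (by positivity)
  have hγ0 : γ 0 = 0 := hval1
  have hγnn : ∀ t ∈ Ico (0:ℝ) ε, 0 ≤ γ t :=
    aux_nonneg (fun t ht => ((hγd t (hIcosub ht)).hasDerivWithinAt))
      (fun t ht => hγ'pos t (hIcosub ht)) hγ0
  have hSsig : ∀ t ∈ Ico (0:ℝ) ε, S (γ t) = sig (γ t) ∧ L (γ t) = lam (γ t) :=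
    fun t ht => ⟨hSeq (mem_Ici.mpr (hγnn t ht)), hLeq (mem_Ici.mpr (hγnn t ht))⟩
  have hsigγpos : ∀ t ∈ Ico (0:ℝ) ε, 0 < sig (γ t) :=
    fun t ht => hsigpos _ (mem_Ici.mpr (hγnn t ht))
  -- continuity helpers
  have hfc : ∀ t ∈ Ioo (-ε) ε, ContinuousAt f t := fun t ht => (hf t (hkey t ht).1).continuousAt
  have hγc : ∀ t ∈ Ioo (-ε) ε, ContinuousAt γ t :=
    fun t ht => continuous_fst.continuousAt.comp (hfc t ht)
  have hAc : ∀ t ∈ Ioo (-ε) ε, ContinuousAt A t :=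
    fun t ht => continuous_snd.continuousAt.comp (hfc t ht)
  have hdenc : ∀ t ∈ Ioo (-ε) ε, ContinuousAt (fun x => S ((f x).1)^2 * ((f x).2)^2) t := by
    intro t ht
    exact (((hS.continuous.continuousAt.comp (hγc t ht)).pow 2).mul ((hAc t ht).pow 2))
  have hdenne : ∀ t ∈ Ioo (-ε) ε, S ((f t).1)^2 * ((f t).2)^2 ≠ 0 := by
    intro t ht
    have h1 := (hkey t ht).2.1
    have h2 := (hkey t ht).2.2
    positivity
  have hγ'c : ∀ t ∈ Ioo (-ε) ε, ContinuousAt γ' t := by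
    intro t ht
    exact continuousAt_const.div (hdenc t ht) (hdenne t ht)
  have ha'c : ∀ t ∈ Ioo (-ε) ε, ContinuousAt a' t := by
    intro t ht
    have h1 := (hkey t ht).2.1
    have h2 := (hkey t ht).2.2
    have hd2 : ContinuousAt (fun x => S ((f x).1)^2 * (f x).2) t :=
      ((hS.continuous.continuousAt.comp (hγc t ht)).pow 2).mul (hAc t ht)
    have hd2ne : S ((f t).1)^2 * (f t).2 ≠ 0 := by positivity
    exact ((hL.continuous.continuousAt.comp (hγc t ht)).div hd2 hd2ne).sub (hAc t ht)
  -- the beta function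
  set muE : ℝ → ℝ := fun x => mu (max x 0) with hmuEdef
  have hmuE : Continuous muE :=
    hmu.comp_continuous (continuous_id.max continuous_const)
      (fun x => mem_Ici.mpr (le_max_right _ _))
  set h : ℝ → ℝ := fun u => A u * muE (γ u) * γ' u with hhdef
  have hhc : ∀ u ∈ Ioo (-ε) ε, ContinuousAt h u := by
    intro u hu
    exact ((hAc u hu).mul (hmuE.continuousAt.comp (hγc u hu))).mul (hγ'c u hu)
  have hexpHc : ContinuousOn (fun s => Real.exp s * h s) (Ioo (-ε) ε) := by
    intro u hu
    exact (Real.continuous_exp.continuousAt.mul (hhc u hu)).continuousWithinAt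
  set I : ℝ → ℝ := fun t => ∫ s in (0:ℝ)..t, Real.exp s * h s with hIdef
  have hI : ∀ t ∈ Ico (0:ℝ) ε, HasDerivAt I (Real.exp t * h t) t := by
    intro t ht
    have htIoo : t ∈ Ioo (-ε) ε := hIcosub ht
    have hsub : uIcc (0:ℝ) t ⊆ Ioo (-ε) ε := by
      rw [uIcc_of_le ht.1]
      exact fun y hy => ⟨lt_of_lt_of_le (neg_lt_zero.mpr hεpos) hy.1, lt_of_le_of_lt hy.2 ht.2⟩
    exact intervalIntegral.integral_hasDerivAt_right
      ((hexpHc.mono hsub).intervalIntegrable)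
      (hexpHc.stronglyMeasurableAtFilter isOpen_Ioo t htIoo)
      (Real.continuous_exp.continuousAt.mul (hhc t htIoo))
  set β : ℝ → ℝ := fun t => Real.exp (-t) * (β₀ + I t) with hβdef
  set b' : ℝ → ℝ := fun t => h t - β t with hb'def
  have hβd : ∀ t ∈ Ico (0:ℝ) ε, HasDerivAt β (b' t) t := by
    intro t ht
    have he : HasDerivAt (fun u : ℝ => Real.exp (-u)) (-Real.exp (-t)) t := by
      simpa [Function.comp_def] using (Real.hasDerivAt_exp (-t)).comp t (hasDerivAt_neg' (x := t))
    have hsum : HasDerivAt (fun u => β₀ + I u) (Real.exp t * h t) t := (hI t ht).const_add β₀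
    have hmul := he.mul hsum
    have hexp1 : Real.exp (-t) * Real.exp t = 1 := by
      rw [← Real.exp_add]; simp
    have hvaleq : b' t = -Real.exp (-t) * (β₀ + I t) + Real.exp (-t) * (Real.exp t * h t) := by
      simp only [hb'def, hβdef]
      linear_combination (-(h t)) * hexp1
    rw [hvaleq]
    exact hmul
  have hβc : ∀ t ∈ Ico (0:ℝ) ε, ContinuousAt β t := fun t ht => (hβd t ht).continuousAt
  have hβ0 : β 0 = β₀ := by
    simp only [hβdef, hIdef]
    rw [intervalIntegral.integral_same]
    simp
  -- assemble
  refine ⟨ε, hεpos, A, β, γ, a', b', γ', ?_, ?_, ?_, ?_, ?_, ?_, ?_, ?_, ?_, ?_, ?_, ?_, ?_, ?_⟩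
  · exact fun t ht => (hAd t (hIcosub ht)).hasDerivWithinAt
  · exact fun t ht => (hβd t ht).hasDerivWithinAt
  · exact fun t ht => (hγd t (hIcosub ht)).hasDerivWithinAt
  · exact fun t ht => (ha'c t (hIcosub ht)).continuousWithinAt
  · exact fun t ht => ((hhc t (hIcosub ht)).sub (hβc t ht)).continuousWithinAt
  · exact fun t ht => (hγ'c t (hIcosub ht)).continuousWithinAt
  · exact hApos
  · exact fun t ht => hγ'pos t (hIcosub ht)
  · exact hval2
  · exact hβ0
  · exact hγ0
  · -- equation (i)
    intro t ht
    have hs := hsigγpos t ht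
    have ha := hApos t ht
    have hγ'eq : γ' t = (1/(sig (γ t) * A t))^2 := by
      simp only [hγ'def]
      rw [← (hSsig t ht).1]
      rw [div_pow, one_pow, mul_pow]
    rw [hγ'eq, Real.sqrt_sq (by positivity)]
    field_simp
  · -- equation (ii)
    intro t ht
    have hs := hsigγpos t ht
    have ha := hApos t ht
    have hsne : sig (γ t) ≠ 0 := ne_of_gt hs
    have hane : A t ≠ 0 := ne_of_gt ha
    have hγ'eq : γ' t = 1/(sig (γ t)^2 * (A t)^2) := by
      simp only [hγ'def]
      rw [← (hSsig t ht).1]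
    have ha'eq : a' t = lam (γ t)/(sig (γ t)^2 * A t) - A t := by
      simp only [ha'def]
      rw [← (hSsig t ht).1, ← (hSsig t ht).2]
    rw [hγ'eq, ha'eq]
    field_simp
    ring
  · -- equation (iii)
    intro t ht
    have hmuEeq : muE (γ t) = mu (γ t) := by
      simp only [hmuEdef]
      rw [max_eq_left (hγnn t ht)]
    have : b' t = h t - β t := rfl
    rw [this]
    simp only [hhdef]
    rw [hmuEeq]
    ring

/-- Lemma 3.1. For `λ ∈ C¹` positive, `σ ∈ C²` positive and `μ`
continuous on `[0,∞)`, the ODE system for the transformation functions `α, β, γ` has a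
local solution with the prescribed initial data, and any two such solutions agree on the
intersection of their domains. -/
theorem ou_transformation_ode_existence_uniqueness
    (lam sig mu : ℝ → ℝ)
    (hlam : ContDiffOn ℝ 1 lam (Set.Ici 0))
    (hlampos : ∀ t ∈ Set.Ici (0 : ℝ), 0 < lam t)
    (hsig : ContDiffOn ℝ 2 sig (Set.Ici 0))
    (hsigpos : ∀ t ∈ Set.Ici (0 : ℝ), 0 < sig t)
    (hmu : ContinuousOn mu (Set.Ici 0))
    (α₀ β₀ : ℝ) (hα₀ : 0 < α₀) :
    (∃ ε > 0, ∃ α β γ α' β' γ' : ℝ → ℝ,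
      SolvesOUSystem lam sig mu α₀ β₀ ε α β γ α' β' γ') ∧
    (∀ ε₁ ε₂ : ℝ, ∀ α₁ β₁ γ₁ a₁ b₁ c₁ α₂ β₂ γ₂ a₂ b₂ c₂ : ℝ → ℝ,
      SolvesOUSystem lam sig mu α₀ β₀ ε₁ α₁ β₁ γ₁ a₁ b₁ c₁ →
      SolvesOUSystem lam sig mu α₀ β₀ ε₂ α₂ β₂ γ₂ a₂ b₂ c₂ →
      ∀ t ∈ Set.Ico (0 : ℝ) (min ε₁ ε₂), α₁ t = α₂ t ∧ β₁ t = β₂ t ∧ γ₁ t = γ₂ t) :=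
 ⟨exists_part hlam hsig hsigpos hmu α₀ β₀ hα₀,
    fun ε₁ ε₂ α₁ β₁ γ₁ a₁ b₁ c₁ α₂ β₂ γ₂ a₂ b₂ c₂ h₁ h₂ =>
      unique_part hlam hsig hsigpos h₁ h₂⟩
end

section
/- Let λ : [0, ∞) → (0, ∞) be continuous and σ : [0, ∞) → (0, ∞) be continuously differentiable. Suppose γ : (0, ε) → (0, ∞) is twice differentiable with γ′(t) > 0 and α : (0, ε) → (0, ∞) is differentiable, and that on (0, ε) they satisfy σ(γ(t)) · α(t) · √(γ′(t)) = 1 and λ(γ(t)) · γ′(t) − α′(t)/α(t) = 1. Then for all t ∈ (0, ε), γ″(t)/γ′(t) = 2 − 2 γ′(t) · ( λ(γ(t)) + σ′(γ(t))/σ(γ(t)) ). -/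
open Set

/-- key reduction in the proof of Lemma 3.1. If `α, γ` satisfy
`σ(γ(t)) α(t) √(γ'(t)) = 1` and `λ(γ(t)) γ'(t) − α'(t)/α(t) = 1` on `(0, ε)`, with `γ`
twice differentiable, `γ' > 0`, `γ > 0`, `α > 0`, `λ` continuous positive and `σ ∈ C¹`
positive, then `γ''(t)/γ'(t) = 2 − 2 γ'(t)(λ(γ(t)) + σ'(γ(t))/σ(γ(t)))`. -/
theorem gamma_second_order_ode
    (lam sig : ℝ → ℝ) (ε : ℝ)
    (hlam : ContinuousOn lam (Set.Ici 0))
    (hlampos : ∀ t ∈ Set.Ici (0 : ℝ), 0 < lam t)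
    (hsig : ContDiffOn ℝ 1 sig (Set.Ici 0))
    (hsigpos : ∀ t ∈ Set.Ici (0 : ℝ), 0 < sig t)
    (γ α γ' γ'' α' : ℝ → ℝ)
    (hγd : ∀ t ∈ Set.Ioo (0 : ℝ) ε, HasDerivAt γ (γ' t) t)
    (hγdd : ∀ t ∈ Set.Ioo (0 : ℝ) ε, HasDerivAt γ' (γ'' t) t)
    (hαd : ∀ t ∈ Set.Ioo (0 : ℝ) ε, HasDerivAt α (α' t) t)
    (hγpos : ∀ t ∈ Set.Ioo (0 : ℝ) ε, 0 < γ t)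
    (hγ'pos : ∀ t ∈ Set.Ioo (0 : ℝ) ε, 0 < γ' t)
    (hαpos : ∀ t ∈ Set.Ioo (0 : ℝ) ε, 0 < α t)
    (heq1 : ∀ t ∈ Set.Ioo (0 : ℝ) ε, sig (γ t) * α t * Real.sqrt (γ' t) = 1)
    (heq2 : ∀ t ∈ Set.Ioo (0 : ℝ) ε, lam (γ t) * γ' t - α' t / α t = 1) :
    ∀ t ∈ Set.Ioo (0 : ℝ) ε,
      γ'' t / γ' t = 2 - 2 * γ' t * (lam (γ t) + deriv sig (γ t) / sig (γ t)) := by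
  intro t ht
  have hγt : 0 < γ t := hγpos t ht
  have hg' : 0 < γ' t := hγ'pos t ht
  have ha : 0 < α t := hαpos t ht
  have hs : 0 < sig (γ t) := hsigpos _ (le_of_lt hγt)
  -- sig is differentiable at γ t
  have hsigd : HasDerivAt sig (deriv sig (γ t)) (γ t) := by
    have h1 : DifferentiableWithinAt ℝ sig (Set.Ici 0) (γ t) :=
      (hsig.differentiableOn one_ne_zero) _ (le_of_lt hγt)
    exact (h1.differentiableAt (Ici_mem_nhds hγt)).hasDerivAt
  have hcomp : HasDerivAt (fun u => sig (γ u)) (deriv sig (γ t) * γ' t) t :=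
    hsigd.comp t (hγd t ht)
  have hsqrt : HasDerivAt (fun u => Real.sqrt (γ' u))
      (1 / (2 * Real.sqrt (γ' t)) * γ'' t) t :=
    (Real.hasDerivAt_sqrt hg'.ne').comp t (hγdd t ht)
  have hF : HasDerivAt (fun u => sig (γ u) * α u * Real.sqrt (γ' u))
      ((deriv sig (γ t) * γ' t * α t + sig (γ t) * α' t) * Real.sqrt (γ' t)
        + sig (γ t) * α t * (1 / (2 * Real.sqrt (γ' t)) * γ'' t)) t :=
    (hcomp.mul (hαd t ht)).mul hsqrt
  have hev : (fun u => sig (γ u) * α u * Real.sqrt (γ' u)) =ᶠ[nhds t] fun _ => (1:ℝ) := by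
    filter_upwards [isOpen_Ioo.mem_nhds ht] with u hu
    exact heq1 u hu
  have hD0 : (deriv sig (γ t) * γ' t * α t + sig (γ t) * α' t) * Real.sqrt (γ' t)
        + sig (γ t) * α t * (1 / (2 * Real.sqrt (γ' t)) * γ'' t) = 0 := by
    have h1 : HasDerivAt (fun _ : ℝ => (1:ℝ))
        ((deriv sig (γ t) * γ' t * α t + sig (γ t) * α' t) * Real.sqrt (γ' t)
          + sig (γ t) * α t * (1 / (2 * Real.sqrt (γ' t)) * γ'' t)) t :=
      hF.congr_of_eventuallyEq hev.symm
    exact h1.unique (hasDerivAt_const t 1)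
  have hq : Real.sqrt (γ' t) ^ 2 = γ' t := Real.sq_sqrt hg'.le
  have hqpos : 0 < Real.sqrt (γ' t) := Real.sqrt_pos.mpr hg'
  have ha' : α' t = (lam (γ t) * γ' t - 1) * α t := by
    have := heq2 t ht
    field_simp at this
    linarith
  field_simp at hD0
  have hD1 : 2 * (deriv sig (γ t) * γ' t * α t + sig (γ t) * α' t) * γ' t
      + sig (γ t) * α t * γ'' t = 0 := by
    linear_combination hD0 - 2 * (deriv sig (γ t) * γ' t * α t + sig (γ t) * α' t) * hq
  have key : (γ'' t * sig (γ t)) * α t =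
      ((2 * sig (γ t) - 2 * γ' t * (lam (γ t) * sig (γ t) + deriv sig (γ t))) * γ' t) * α t := by
    linear_combination hD1 - 2 * sig (γ t) * γ' t * ha'
  have key2 := mul_right_cancel₀ ha.ne' key
  field_simp
  linear_combination key2
end

section
/- Let τ be a nonnegative random variable on a probability space (Ω, ℱ, P), let (α_k)_{k≥1} be a strictly increasing sequence of positive reals with α_k → ∞, and let (C_k)_{k≥1} be real numbers with ∑_{k=1}^∞ |C_k| e^{−α_k t₀} < ∞ for some t₀ > 0. Suppose P(τ > t) = ∑_{k=1}^∞ C_k e^{−α_k t} for all t ≥ t₀. Then E[e^{θτ}] < ∞ for every θ < α₁; i.e., the distribution of τ is light-tailed with exponential moments up to order α₁. -/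
open MeasureTheory Filter

/-- Lemma 2.2, abstract form. A nonnegative random variable whose
survival function is eventually an absolutely convergent exponential series
`P(τ > t) = ∑ C_k e^{−α_k t}` with strictly increasing positive exponents `α_k → ∞` is
light-tailed: `E[e^{θτ}] < ∞` for every `θ < α₀`. -/
theorem light_tail_of_exponential_series_survival
    {Ω : Type*} [MeasurableSpace Ω] {P : Measure Ω} [IsProbabilityMeasure P]
    (τ : Ω → ℝ) (hτmeas : Measurable τ) (hτnn : ∀ ω, 0 ≤ τ ω)
    (α C : ℕ → ℝ) (hmono : StrictMono α) (hpos : ∀ k, 0 < α k)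
    (htend : Tendsto α atTop atTop)
    (t₀ : ℝ) (ht₀ : 0 < t₀)
    (hsum : Summable fun k => |C k| * Real.exp (-α k * t₀))
    (hsurv : ∀ t, t₀ ≤ t →
      (P {ω | t < τ ω}).toReal = ∑' k, C k * Real.exp (-α k * t))
    (θ : ℝ) (hθ : θ < α 0) :
    Integrable (fun ω => Real.exp (θ * τ ω)) P := by
  have hmeasτ : Measurable fun ω => Real.exp (θ * τ ω) := (hτmeas.const_mul θ).exp
  rcases le_or_gt θ 0 with hθ0 | hθ0
  · refine (integrable_const (1:ℝ)).mono' hmeasτ.aestronglyMeasurable ?_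
    refine Eventually.of_forall fun ω => ?_
    rw [Real.norm_eq_abs, abs_of_pos (Real.exp_pos _)]
    exact Real.exp_le_one_iff.mpr (mul_nonpos_of_nonpos_of_nonneg hθ0 (hτnn ω))
  -- θ > 0.
  set S : ℝ := ∑' k, |C k| * Real.exp (-α k * t₀) with hS
  have hS0 : 0 ≤ S := tsum_nonneg fun k => by positivity
  set M : ℝ := S * Real.exp (α 0 * t₀) with hM
  have hM0 : 0 ≤ M := by positivity
  -- tail bound
  have htail : ∀ t, t₀ ≤ t →
      (P {ω | t < τ ω}).toReal ≤ M * Real.exp (-(α 0) * t) := by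
    intro t ht
    rw [hsurv t ht]
    have hsum_t : Summable fun k => |C k| * Real.exp (-α k * t) := by
      refine hsum.of_nonneg_of_le (fun k => by positivity) fun k => ?_
      have : -α k * t ≤ -α k * t₀ := by nlinarith [hpos k]
      exact mul_le_mul_of_nonneg_left (Real.exp_le_exp.mpr this) (abs_nonneg _)
    have hsum_t' : Summable fun k => C k * Real.exp (-α k * t) := by
      apply Summable.of_abs
      simpa [abs_mul, abs_of_pos (Real.exp_pos _)] using hsum_t
    calc ∑' k, C k * Real.exp (-α k * t)
        ≤ ∑' k, |C k| * Real.exp (-α k * t) := by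
          refine Summable.tsum_le_tsum (fun k => ?_) hsum_t' hsum_t
          exact mul_le_mul_of_nonneg_right (le_abs_self _) (Real.exp_pos _).le
      _ ≤ ∑' k, (|C k| * Real.exp (-α k * t₀)) * Real.exp (-(α 0) * (t - t₀)) := by
          refine Summable.tsum_le_tsum (fun k => ?_) hsum_t (hsum.mul_right _)
          have hα : α 0 ≤ α k := hmono.monotone (Nat.zero_le k)
          have h1 : Real.exp (-α k * t) ≤
              Real.exp (-α k * t₀) * Real.exp (-(α 0) * (t - t₀)) := by
            rw [← Real.exp_add]
            apply Real.exp_le_exp.mpr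
            nlinarith
          calc |C k| * Real.exp (-α k * t)
              ≤ |C k| * (Real.exp (-α k * t₀) * Real.exp (-(α 0) * (t - t₀))) :=
                mul_le_mul_of_nonneg_left h1 (abs_nonneg _)
            _ = (|C k| * Real.exp (-α k * t₀)) * Real.exp (-(α 0) * (t - t₀)) := by ring
      _ = S * Real.exp (-(α 0) * (t - t₀)) := tsum_mul_right
      _ = M * Real.exp (-(α 0) * t) := by
          rw [hM, mul_assoc, ← Real.exp_add]
          ring_nf
  have htail' : ∀ t, t₀ ≤ t →
      P {ω | t < τ ω} ≤ ENNReal.ofReal (M * Real.exp (-(α 0) * t)) := by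
    intro t ht
    rw [← ENNReal.ofReal_toReal (measure_ne_top P _)]
    exact ENNReal.ofReal_le_ofReal (htail t ht)
  -- layer cake
  have hgc : Continuous fun t : ℝ => θ * Real.exp (θ * t) := by fun_prop
  have key := lintegral_comp_eq_lintegral_meas_lt_mul P
    (f := τ) (g := fun t => θ * Real.exp (θ * t))
    (Eventually.of_forall hτnn) hτmeas.aemeasurable
    (fun t _ => hgc.intervalIntegrable 0 t)
    (Eventually.of_forall fun t => by positivity)
  have hint : ∀ x : ℝ, (∫ t in (0:ℝ)..x, θ * Real.exp (θ * t)) = Real.exp (θ * x) - 1 := by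
    intro x
    have hderiv : ∀ t ∈ Set.uIcc (0:ℝ) x,
        HasDerivAt (fun u => Real.exp (θ * u)) (θ * Real.exp (θ * t)) t := by
      intro t _
      simpa [mul_comm, Function.comp_def] using
        ((Real.hasDerivAt_exp (θ * t)).comp t ((hasDerivAt_id t).const_mul θ))
    rw [intervalIntegral.integral_eq_sub_of_hasDerivAt hderiv (hgc.intervalIntegrable 0 x)]
    simp
  simp only [hint] at key
  -- bound the two pieces of the tail integral
  have hA : (∫⁻ t in Set.Ioc 0 t₀,
      P {a | t < τ a} * ENNReal.ofReal (θ * Real.exp (θ * t))) ≠ ⊤ := by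
    have hb : ∀ t ∈ Set.Ioc 0 t₀,
        P {a | t < τ a} * ENNReal.ofReal (θ * Real.exp (θ * t))
          ≤ ENNReal.ofReal (θ * Real.exp (θ * t₀)) := by
      intro t ht
      calc P {a | t < τ a} * ENNReal.ofReal (θ * Real.exp (θ * t))
          ≤ 1 * ENNReal.ofReal (θ * Real.exp (θ * t₀)) := by
            gcongr
            · exact prob_le_one
            · exact ht.2
        _ = ENNReal.ofReal (θ * Real.exp (θ * t₀)) := one_mul _
    refine ne_top_of_le_ne_top ?_ (setLIntegral_mono' measurableSet_Ioc hb)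
    rw [setLIntegral_const]
    exact ENNReal.mul_ne_top ENNReal.ofReal_ne_top (by simp)
  have hB : (∫⁻ t in Set.Ioi t₀,
      P {a | t < τ a} * ENNReal.ofReal (θ * Real.exp (θ * t))) ≠ ⊤ := by
    have hb : ∀ t ∈ Set.Ioi t₀,
        P {a | t < τ a} * ENNReal.ofReal (θ * Real.exp (θ * t))
          ≤ ENNReal.ofReal ((M * θ) * Real.exp (-(α 0 - θ) * t)) := by
      intro t ht
      calc P {a | t < τ a} * ENNReal.ofReal (θ * Real.exp (θ * t))
          ≤ ENNReal.ofReal (M * Real.exp (-(α 0) * t)) *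
              ENNReal.ofReal (θ * Real.exp (θ * t)) := by
            gcongr
            exact htail' t (le_of_lt ht)
        _ = ENNReal.ofReal ((M * Real.exp (-(α 0) * t)) * (θ * Real.exp (θ * t))) :=
            (ENNReal.ofReal_mul (by positivity)).symm
        _ = ENNReal.ofReal ((M * θ) * Real.exp (-(α 0 - θ) * t)) := by
            congr 1
            rw [show (M * Real.exp (-(α 0) * t)) * (θ * Real.exp (θ * t))
                = (M * θ) * (Real.exp (-(α 0) * t) * Real.exp (θ * t)) by ring,
              ← Real.exp_add]
            ring_nf
    refine ne_top_of_le_ne_top ?_ (setLIntegral_mono' measurableSet_Ioi hb)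
    have hi : IntegrableOn (fun t => (M * θ) * Real.exp (-(α 0 - θ) * t)) (Set.Ioi t₀) :=
      (exp_neg_integrableOn_Ioi t₀ (by linarith)).const_mul _
    exact hi.lintegral_lt_top.ne
  -- conclude
  refine ⟨hmeasτ.aestronglyMeasurable, ?_⟩
  rw [hasFiniteIntegral_iff_ofReal (Eventually.of_forall fun ω => (Real.exp_pos _).le)]
  calc ∫⁻ ω, ENNReal.ofReal (Real.exp (θ * τ ω)) ∂P
      ≤ ∫⁻ ω, (ENNReal.ofReal (Real.exp (θ * τ ω) - 1) + 1) ∂P := by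
        refine lintegral_mono fun ω => ?_
        calc ENNReal.ofReal (Real.exp (θ * τ ω))
            = ENNReal.ofReal ((Real.exp (θ * τ ω) - 1) + 1) := by ring_nf
          _ ≤ ENNReal.ofReal (Real.exp (θ * τ ω) - 1) + ENNReal.ofReal 1 :=
              ENNReal.ofReal_add_le
          _ = ENNReal.ofReal (Real.exp (θ * τ ω) - 1) + 1 := by simp
    _ = (∫⁻ ω, ENNReal.ofReal (Real.exp (θ * τ ω) - 1) ∂P) + 1 := by
        rw [lintegral_add_right _ measurable_const, lintegral_const, one_mul, measure_univ]
    _ = (∫⁻ t in Set.Ioi 0, P {a | t < τ a} * ENNReal.ofReal (θ * Real.exp (θ * t))) + 1 := by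
        rw [key]
    _ < ⊤ := by
        have hsplit : (∫⁻ t in Set.Ioi 0,
            P {a | t < τ a} * ENNReal.ofReal (θ * Real.exp (θ * t)))
            ≤ (∫⁻ t in Set.Ioc 0 t₀,
                P {a | t < τ a} * ENNReal.ofReal (θ * Real.exp (θ * t)))
              + (∫⁻ t in Set.Ioi t₀,
                P {a | t < τ a} * ENNReal.ofReal (θ * Real.exp (θ * t))) := by
          rw [← Set.Ioc_union_Ioi_eq_Ioi ht₀.le]
          exact lintegral_union_le _ _ _
        have : (∫⁻ t in Set.Ioi 0,
            P {a | t < τ a} * ENNReal.ofReal (θ * Real.exp (θ * t))) ≠ ⊤ :=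
          ne_top_of_le_ne_top (ENNReal.add_ne_top.mpr ⟨hA, hB⟩) hsplit
        rw [ENNReal.add_lt_top]
        exact ⟨this.lt_top, ENNReal.one_lt_top⟩
end
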